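/- Let G be a connected graph, C, c : E → ℝ, and let L be an integer. Suppose (X,Y) is a pair of spanning trees satisfying the sufficient pair optimality conditions for some θ ≥ 0 (i.e., there exist α,β ≥ 0 with α(e)+β(e)=θ for all e, X optimal for C-α, Y optimal for c-β, α vanishing on X\Y and β vanishing on Y\X), and additionally |X ∩ Y| ≥ L and θ·(|X ∩ Y| - L) = 0. Then (X,Y) minimizes ∑_{e∈X'} C(e) + ∑_{e∈Y'} c(e) over all pairs of spanning trees (X',Y') with |X' ∩ Y'| ≥ L. -/

import Mathlib

open Finset

/-- `T` is (the edge set of) a spanning tree of `G`: its edges are edges of `G`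
and the graph formed by these edges is a tree (connected and acyclic, spanning all vertices). -/
def IsSpanningTree {V : Type*} (G : SimpleGraph V) (T : Finset (Sym2 V)) : Prop :=
  (T : Set (Sym2 V)) ⊆ G.edgeSet ∧ (SimpleGraph.fromEdgeSet (T : Set (Sym2 V))).IsTree

/-- `f` lies on the unique path in the tree `T` joining the endpoints of `e`:
equivalently, `f ∈ T` and removing `f` disconnects the endpoints of `e` in `T`. -/
def OnTreePath {V : Type*} (T : Finset (Sym2 V)) (e f : Sym2 V) : Prop :=
  f ∈ T ∧ ∀ u v : V, e = s(u, v) →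
    ¬ (SimpleGraph.fromEdgeSet ((T : Set (Sym2 V)) \ {f})).Reachable u v

/-- Path optimality conditions for a spanning tree `T` of `G` with edge costs `w`. -/
def PathOpt {V : Type*} (G : SimpleGraph V) (T : Finset (Sym2 V)) (w : Sym2 V → ℝ) : Prop :=
  ∀ u v : V, s(u, v) ∈ G.edgeSet → s(u, v) ∉ T →
    ∀ f, OnTreePath T s(u, v) f → w f ≤ w (s(u, v))

/-- The sufficient pair optimality conditions of Theorem 2, with explicit witnesses `α`, `β`. -/
def SuffPairOpt {V : Type*} [Fintype V] [DecidableEq V] (G : SimpleGraph V)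
    (C c : Sym2 V → ℝ) (θ : ℝ) (X Y : Finset (Sym2 V)) (α β : Sym2 V → ℝ) : Prop :=
  (∀ e, 0 ≤ α e) ∧ (∀ e, 0 ≤ β e) ∧ (∀ e ∈ G.edgeSet, α e + β e = θ) ∧
  (∀ T, IsSpanningTree G T → ∑ e ∈ X, (C e - α e) ≤ ∑ e ∈ T, (C e - α e)) ∧
  (∀ T, IsSpanningTree G T → ∑ e ∈ Y, (c e - β e) ≤ ∑ e ∈ T, (c e - β e)) ∧
  (∀ e ∈ X \ Y, α e = 0) ∧ (∀ e ∈ Y \ X, β e = 0)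

/-- Arcs of the admissible graph for the pair `(X,Y)` with reduced costs `Cs`, `cs`:
an `X`-arc `(a,b)` with `a ∉ X`, `b ∈ P_X(a)`, `Cs a = Cs b`, or a `Y`-arc `(a,b)`
(i.e. `(v_f,v_e)` with `f = a`, `e = b`) with `b ∉ Y`, `a ∈ P_Y(b)`, `cs b = cs a`. -/
def AdmArc {V : Type*} [Fintype V] [DecidableEq V] (X Y : Finset (Sym2 V))
    (Cs cs : Sym2 V → ℝ) (a b : Sym2 V) : Prop :=
  (a ∉ X ∧ OnTreePath X a b ∧ Cs a = Cs b) ∨ (b ∉ Y ∧ OnTreePath Y b a ∧ cs b = cs a)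

/-- A node of the admissible graph is admissible if it is reachable (by a directed path)
from some node `v_g` with `g ∈ Y \ X`. -/
def AdmNode {V : Type*} [Fintype V] [DecidableEq V] (X Y : Finset (Sym2 V))
    (Cs cs : Sym2 V → ℝ) (h : Sym2 V) : Prop :=
  ∃ g, g ∈ Y ∧ g ∉ X ∧ Relation.ReflTransGen (AdmArc X Y Cs cs) g h

/-- Theorems 1+2 of the paper: a Lagrangian-optimal pair that is feasible and
satisfies complementary slackness is optimal for the constrained recoverable problem. -/
theorem stmt4 {V : Type*} [Fintype V] [DecidableEq V] (G : SimpleGraph V)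
    (hG : G.Connected) (C c : Sym2 V → ℝ) (θ : ℝ) (hθ : 0 ≤ θ) (L : ℤ)
    (X Y : Finset (Sym2 V)) (hX : IsSpanningTree G X) (hY : IsSpanningTree G Y)
    (α β : Sym2 V → ℝ) (hcond : SuffPairOpt G C c θ X Y α β)
    (hfeas : L ≤ ((X ∩ Y).card : ℤ))
    (hcs : θ * (((X ∩ Y).card : ℝ) - (L : ℝ)) = 0) :
    ∀ X' Y' : Finset (Sym2 V), IsSpanningTree G X' → IsSpanningTree G Y' →
      L ≤ ((X' ∩ Y').card : ℤ) →
      ∑ e ∈ X, C e + ∑ e ∈ Y, c e ≤ ∑ e ∈ X', C e + ∑ e ∈ Y', c e := by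
  intro X' Y' hX' hY' hL'
  obtain ⟨hα, hβ, hθeq, hXopt, hYopt, hαcs, hβcs⟩ := hcond
  have key : ∀ (A B : Finset (Sym2 V)), (A : Set (Sym2 V)) ⊆ G.edgeSet →
      ∑ e ∈ A ∩ B, α e + ∑ e ∈ A ∩ B, β e = θ * ((A ∩ B).card : ℝ) := by
    intro A B hA
    rw [← Finset.sum_add_distrib,
      Finset.sum_congr rfl (fun e he => hθeq e (hA (Finset.mem_inter.1 he).1)),
      Finset.sum_const, nsmul_eq_mul, mul_comm]
  have h1 : ∑ e ∈ X, α e = ∑ e ∈ X ∩ Y, α e := by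
    refine (Finset.sum_subset Finset.inter_subset_left ?_).symm
    intro x hx hnx
    exact hαcs x (Finset.mem_sdiff.2 ⟨hx, fun hy => hnx (Finset.mem_inter.2 ⟨hx, hy⟩)⟩)
  have h2 : ∑ e ∈ Y, β e = ∑ e ∈ X ∩ Y, β e := by
    refine (Finset.sum_subset Finset.inter_subset_right ?_).symm
    intro x hx hnx
    exact hβcs x (Finset.mem_sdiff.2 ⟨hx, fun hy => hnx (Finset.mem_inter.2 ⟨hy, hx⟩)⟩)
  have a1 := key X Y hX.1
  have a2 := key X' Y' hX'.1
  have optX := hXopt X' hX'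
  have optY := hYopt Y' hY'
  have b1 : ∑ e ∈ X' ∩ Y', α e ≤ ∑ e ∈ X', α e :=
    Finset.sum_le_sum_of_subset_of_nonneg Finset.inter_subset_left (fun i _ _ => hα i)
  have b2 : ∑ e ∈ X' ∩ Y', β e ≤ ∑ e ∈ Y', β e :=
    Finset.sum_le_sum_of_subset_of_nonneg Finset.inter_subset_right (fun i _ _ => hβ i)
  have hcard : (L : ℝ) ≤ ((X' ∩ Y').card : ℝ) := by exact_mod_cast hL'
  have c1 : θ * (L : ℝ) ≤ θ * ((X' ∩ Y').card : ℝ) := mul_le_mul_of_nonneg_left hcard hθ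
  rw [mul_sub] at hcs
  have eX : ∑ e ∈ X, (C e - α e) = ∑ e ∈ X, C e - ∑ e ∈ X, α e := Finset.sum_sub_distrib C α
  have eY : ∑ e ∈ Y, (c e - β e) = ∑ e ∈ Y, c e - ∑ e ∈ Y, β e := Finset.sum_sub_distrib c β
  have eX' : ∑ e ∈ X', (C e - α e) = ∑ e ∈ X', C e - ∑ e ∈ X', α e := Finset.sum_sub_distrib C α
  have eY' : ∑ e ∈ Y', (c e - β e) = ∑ e ∈ Y', c e - ∑ e ∈ Y', β e := Finset.sum_sub_distrib c β
  linarith
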